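/- There exist Krein spaces and J-unitary representations for which the conditions [π(G)VH] = K and V*π(g)*π(g')V = V*π(α(g⁻¹)g')V do NOT imply that g ↦ V*π(g)V is α-completely positive. Concretely: on G = ℤ with α(n) = -n, K = ℂ² with J(x,y) = (y,x), π(n)(x,y) = (eⁿx, e⁻ⁿy), and V(x,y) = (x−y, y), one has [π(ℤ)Vℂ²] = ℂ² and V*π(n)*π(m)V = V*π(n+m)V for all n,m ∈ ℤ, yet the map φ(n) = V*π(n)V satisfies φ(1) ≠ φ(−1), so φ is not α-completely positive. -/

import Mathlib

open scoped ComplexOrder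

noncomputable section

def IsInvolution (G : Type*) [Group G] (α : G → G) : Prop :=
  (∀ g, α (α g) = g) ∧ α 1 = 1 ∧ ∀ g : G, α g⁻¹ = (α g)⁻¹

def IsAlphaCP {G : Type*} [Group G] (α : G → G)
    {H : Type*} [NormedAddCommGroup H] [InnerProductSpace ℂ H] [CompleteSpace H]
    (φ : G → H →L[ℂ] H) : Prop :=
  (∀ g₁ g₂ : G, φ (α g₁ * α g₂) = φ (α (g₁ * g₂)) ∧ φ (α (g₁ * g₂)) = φ (g₁ * g₂)) ∧
  (∀ (n : ℕ) (g : Fin n → G) (ξ : Fin n → H),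
    0 ≤ ∑ i, ∑ j, (inner ℂ (φ ((α (g i))⁻¹ * g j) (ξ j)) (ξ i) : ℂ)) ∧
  (∃ K > (0 : ℝ), ∀ (n : ℕ) (g : Fin n → G) (ξ : Fin n → H),
    ∑ i, ∑ j, (inner ℂ (((ContinuousLinearMap.adjoint (φ (g i))) ∘L φ (g j)) (ξ j)) (ξ i) : ℂ) ≤
      (K : ℂ) * ∑ i, ∑ j, (inner ℂ (φ ((α (g i))⁻¹ * g j) (ξ j)) (ξ i) : ℂ)) ∧
  (∀ g : G, ∃ M > (0 : ℝ), ∀ (n : ℕ) (gs : Fin n → G) (ξ : Fin n → H),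
    ∑ i, ∑ j, (inner ℂ (φ ((α (g * gs i))⁻¹ * (g * gs j)) (ξ j)) (ξ i) : ℂ) ≤
      (M : ℂ) * ∑ i, ∑ j, (inner ℂ (φ ((α (gs i))⁻¹ * gs j) (ξ j)) (ξ i) : ℂ))

noncomputable def Jex : EuclideanSpace ℂ (Fin 2) →L[ℂ] EuclideanSpace ℂ (Fin 2) :=
  Matrix.toEuclideanCLM (𝕜 := ℂ) !![0, 1; 1, 0]

noncomputable def piEx (g : Multiplicative ℤ) :
    EuclideanSpace ℂ (Fin 2) →L[ℂ] EuclideanSpace ℂ (Fin 2) :=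
  Matrix.toEuclideanCLM (𝕜 := ℂ)
    !![Complex.exp ((Multiplicative.toAdd g : ℤ) : ℂ), 0;
       0, Complex.exp (-((Multiplicative.toAdd g : ℤ) : ℂ))]

noncomputable def Vex : EuclideanSpace ℂ (Fin 2) →L[ℂ] EuclideanSpace ℂ (Fin 2) :=
  Matrix.toEuclideanCLM (𝕜 := ℂ) !![1, -1; 0, 1]

namespace CPAux
open ContinuousLinearMap
open scoped Matrix

noncomputable abbrev fM (M : Matrix (Fin 2) (Fin 2) ℂ) :
    EuclideanSpace ℂ (Fin 2) →L[ℂ] EuclideanSpace ℂ (Fin 2) :=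
  Matrix.toEuclideanCLM (𝕜 := ℂ) M

lemma fM_mul (M N : Matrix (Fin 2) (Fin 2) ℂ) : fM M ∘L fM N = fM (M * N) := by
  rw [← ContinuousLinearMap.mul_def, ← map_mul]

set_option synthInstance.maxHeartbeats 1000000

lemma fM_adj (M : Matrix (Fin 2) (Fin 2) ℂ) : adjoint (fM M) = fM Mᴴ := by
  have h := map_star (Matrix.toEuclideanCLM (𝕜 := ℂ) (n := Fin 2)) M
  rw [← ContinuousLinearMap.star_eq_adjoint, ← Matrix.star_eq_conjTranspose]
  exact h.symm

lemma fM_inj : Function.Injective fM := fun _ _ h =>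
  (Matrix.toEuclideanCLM (𝕜 := ℂ) (n := Fin 2)).injective h

lemma piEx_eq (g : Multiplicative ℤ) :
    piEx g = fM !![Complex.exp ((Multiplicative.toAdd g : ℤ) : ℂ), 0;
       0, Complex.exp (-((Multiplicative.toAdd g : ℤ) : ℂ))] := rfl

lemma Jex_eq : Jex = fM !![0, 1; 1, 0] := rfl

lemma Vex_eq : Vex = fM !![1, -1; 0, 1] := rfl

lemma star_exp_int (n : ℤ) :
    star (Complex.exp ((n : ℤ) : ℂ)) = Complex.exp ((n : ℤ) : ℂ) := by
  simp [Complex.star_def, ← Complex.exp_conj]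

lemma star_exp_neg_int (n : ℤ) :
    star (Complex.exp (-((n : ℤ) : ℂ))) = Complex.exp (-((n : ℤ) : ℂ)) := by
  simp [Complex.star_def, ← Complex.exp_conj]

lemma adj_piEx (g : Multiplicative ℤ) : adjoint (piEx g) = piEx g := by
  rw [piEx_eq, fM_adj]
  congr 1
  ext i j
  fin_cases i <;> fin_cases j <;>
    simp [Matrix.conjTranspose_apply, star_exp_int, star_exp_neg_int]

lemma piEx_mul (g g' : Multiplicative ℤ) : piEx (g * g') = piEx g ∘L piEx g' := by
  rw [piEx_eq, piEx_eq, piEx_eq, fM_mul]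
  congr 1
  ext i j
  fin_cases i <;> fin_cases j <;>
    simp [Matrix.mul_apply, Fin.sum_univ_two, ← Complex.exp_add] <;>
    · congr 1; push_cast; ring

end CPAux

open CPAux

open ContinuousLinearMap in
theorem counterexample_not_alphaCP :
    IsInvolution (Multiplicative ℤ) (fun g => g⁻¹) ∧
    adjoint Jex = Jex ∧ Jex ∘L Jex = 1 ∧
    piEx 1 = 1 ∧ (∀ g g', piEx (g * g') = piEx g ∘L piEx g') ∧
    (∀ g : Multiplicative ℤ, piEx g⁻¹ = Jex ∘L adjoint (piEx g) ∘L Jex) ∧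
    (Submodule.span ℂ {x : EuclideanSpace ℂ (Fin 2) |
        ∃ g ξ, x = piEx g (Vex ξ)}).topologicalClosure = ⊤ ∧
    (∀ n m : Multiplicative ℤ,
      adjoint Vex ∘L adjoint (piEx n) ∘L piEx m ∘L Vex =
        adjoint Vex ∘L piEx (n * m) ∘L Vex) ∧
    (adjoint Vex ∘L piEx (Multiplicative.ofAdd (1 : ℤ)) ∘L Vex ≠
      adjoint Vex ∘L piEx (Multiplicative.ofAdd (-1 : ℤ)) ∘L Vex) ∧
    ¬ IsAlphaCP (fun g : Multiplicative ℤ => g⁻¹)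
        (fun g => adjoint Vex ∘L piEx g ∘L Vex) := by
  have hJadj : adjoint Jex = Jex := by
    rw [Jex_eq, fM_adj]
    congr 1
    ext i j
    fin_cases i <;> fin_cases j <;> simp
  have hJJ : Jex ∘L Jex = 1 := by
    rw [Jex_eq, fM_mul, ← map_one (Matrix.toEuclideanCLM (𝕜 := ℂ) (n := Fin 2))]
    congr 1
    ext i j
    fin_cases i <;> fin_cases j <;>
      simp [Matrix.mul_apply, Fin.sum_univ_two, Matrix.one_apply]
  have hpi1 : piEx 1 = 1 := by
    rw [piEx_eq, ← map_one (Matrix.toEuclideanCLM (𝕜 := ℂ) (n := Fin 2))]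
    congr 1
    ext i j
    fin_cases i <;> fin_cases j <;> simp [Matrix.one_apply]
  have hpiinv : ∀ g : Multiplicative ℤ, piEx g⁻¹ = Jex ∘L adjoint (piEx g) ∘L Jex := by
    intro g
    rw [adj_piEx, Jex_eq, piEx_eq g, piEx_eq g⁻¹, fM_mul, fM_mul]
    congr 1
    ext i j
    fin_cases i <;> fin_cases j <;>
      simp [Matrix.mul_apply, Fin.sum_univ_two]
  have hVW : Vex ∘L fM !![1, 1; 0, 1] = 1 := by
    rw [Vex_eq, fM_mul, ← map_one (Matrix.toEuclideanCLM (𝕜 := ℂ) (n := Fin 2))]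
    congr 1
    ext i j
    fin_cases i <;> fin_cases j <;>
      simp [Matrix.mul_apply, Fin.sum_univ_two, Matrix.one_apply]
  have hspan : (Submodule.span ℂ {x : EuclideanSpace ℂ (Fin 2) |
      ∃ g ξ, x = piEx g (Vex ξ)}).topologicalClosure = ⊤ := by
    rw [eq_top_iff]
    intro x _
    refine Submodule.le_topologicalClosure _ (Submodule.subset_span ?_)
    refine ⟨1, fM !![1, 1; 0, 1] x, ?_⟩
    have : Vex (fM !![1, 1; 0, 1] x) = (Vex ∘L fM !![1, 1; 0, 1]) x := rfl
    rw [hpi1, this, hVW]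
    rfl
  have h8 : ∀ n m : Multiplicative ℤ,
      adjoint Vex ∘L adjoint (piEx n) ∘L piEx m ∘L Vex =
        adjoint Vex ∘L piEx (n * m) ∘L Vex := by
    intro n m
    rw [adj_piEx, piEx_mul, ContinuousLinearMap.comp_assoc]
  have key : ∀ g : Multiplicative ℤ, adjoint Vex ∘L piEx g ∘L Vex =
      fM ((Matrix.conjTranspose !![(1 : ℂ), -1; 0, 1]) *
        (!![Complex.exp ((Multiplicative.toAdd g : ℤ) : ℂ), 0;
            0, Complex.exp (-((Multiplicative.toAdd g : ℤ) : ℂ))] * !![1, -1; 0, 1])) := by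
    intro g
    rw [Vex_eq, piEx_eq, fM_adj, fM_mul, fM_mul]
  have hne : adjoint Vex ∘L piEx (Multiplicative.ofAdd (1 : ℤ)) ∘L Vex ≠
      adjoint Vex ∘L piEx (Multiplicative.ofAdd (-1 : ℤ)) ∘L Vex := by
    intro h
    rw [key, key] at h
    have h2 := fM_inj h
    have h3 := (Matrix.ext_iff.2 h2) 0 0
    simp [Matrix.mul_apply, Fin.sum_univ_two, Matrix.conjTranspose_apply] at h3
    have h4 : ((Real.exp 1 : ℝ) : ℂ) = ((Real.exp (-1) : ℝ) : ℂ) := by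
      rw [Complex.ofReal_exp, Complex.ofReal_exp]
      push_cast
      exact h3
    have h5 := Complex.ofReal_injective h4
    have h6 := Real.exp_injective h5
    norm_num at h6
  refine ⟨⟨fun g => inv_inv g, inv_one, fun g => rfl⟩, hJadj, hJJ, hpi1, piEx_mul,
    hpiinv, hspan, h8, hne, ?_⟩
  intro hCP
  obtain ⟨h1, -, -, -⟩ := hCP
  have h2 := (h1 (Multiplicative.ofAdd (1 : ℤ)) 1).2
  simp only [mul_one] at h2
  apply hne
  rw [← ofAdd_neg] at h2
  exact h2.symm
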